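/- Let F = {(u,v,w) ∈ ℝ³ : w ≥ u² + |v|}. Then the set of differences of normals at the origin spans the plane orthogonal to the first coordinate axis: {y − z : y, z ∈ N_F(0,0,0)} = {(a,b,c) ∈ ℝ³ : a = 0} = {0} × ℝ × ℝ. -/

import Mathlib

/-- Any normal at the origin has first coordinate zero. -/
lemma normal_fst_zero (y : EuclideanSpace ℝ (Fin 3))
    (hy : ∀ q ∈ {p : EuclideanSpace ℝ (Fin 3) | p 0 ^ 2 + |p 1| ≤ p 2},
        (inner ℝ y (q - (0 : EuclideanSpace ℝ (Fin 3))) : ℝ) ≤ 0) : y 0 = 0 := by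
  set A : ℝ := |y 2| + 1 with hA
  have hApos : 0 < A := by positivity
  set t : ℝ := y 0 / A with ht
  have hq : (WithLp.toLp 2 ![t, 0, t ^ 2] : EuclideanSpace ℝ (Fin 3)) ∈
      {p : EuclideanSpace ℝ (Fin 3) | p 0 ^ 2 + |p 1| ≤ p 2} := by
    show (![t, 0, t ^ 2] : Fin 3 → ℝ) 0 ^ 2 + |(![t, 0, t ^ 2] : Fin 3 → ℝ) 1| ≤
      (![t, 0, t ^ 2] : Fin 3 → ℝ) 2
    norm_num
    exact le_refl _
  have h := hy _ hq
  simp only [sub_zero, PiLp.inner_apply, RCLike.inner_apply, conj_trivial,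
    Fin.sum_univ_three, PiLp.toLp_apply] at h
  simp only [Matrix.cons_val_zero, Matrix.cons_val_one, Matrix.head_cons,
    Matrix.cons_val_two, Matrix.tail_cons] at h
  -- h : y 0 * t + y 1 * 0 + y 2 * t ^ 2 ≤ 0
  have h2 : |y 2| ≤ A := by simp [hA]
  have habs : -|y 2| ≤ y 2 := neg_abs_le _
  have hAne : A ≠ 0 := ne_of_gt hApos
  have htA : t * A = y 0 := div_mul_cancel₀ _ hAne
  have hA3 : (1:ℝ) ≤ A + y 2 := by rw [hA]; linarith
  have h3 : t ^ 2 * (A + y 2) ≤ 0 := by rw [← htA] at h; nlinarith [h]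
  have h4 : t ^ 2 ≤ 0 := by
    nlinarith [mul_nonneg (sq_nonneg t) (show (0:ℝ) ≤ A + y 2 - 1 by linarith)]
  have ht0 : t = 0 :=
    sq_eq_zero_iff.mp (le_antisymm h4 (sq_nonneg t))
  rw [← htA, ht0, zero_mul]

/-- For `F = {(u,v,w) : w ≥ u² + |v|} ⊆ ℝ³`, the differences of normals at the origin
span the plane orthogonal to the first coordinate axis:
`N_F(0) − N_F(0) = {(a,b,c) : a = 0}`. -/
theorem normal_cone_differences_ridge :
    {d : EuclideanSpace ℝ (Fin 3) |
        ∃ y ∈ {y : EuclideanSpace ℝ (Fin 3) |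
            ∀ q ∈ {p : EuclideanSpace ℝ (Fin 3) | p 0 ^ 2 + |p 1| ≤ p 2},
              (inner ℝ y (q - (0 : EuclideanSpace ℝ (Fin 3))) : ℝ) ≤ 0},
          ∃ z ∈ {y : EuclideanSpace ℝ (Fin 3) |
            ∀ q ∈ {p : EuclideanSpace ℝ (Fin 3) | p 0 ^ 2 + |p 1| ≤ p 2},
              (inner ℝ y (q - (0 : EuclideanSpace ℝ (Fin 3))) : ℝ) ≤ 0},
            d = y - z} =
      {d : EuclideanSpace ℝ (Fin 3) | d 0 = 0} := by
  ext d
  simp only [Set.mem_setOf_eq]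
  constructor
  · rintro ⟨y, hy, z, hz, rfl⟩
    have h1 := normal_fst_zero y hy
    have h2 := normal_fst_zero z hz
    simp [PiLp.sub_apply, h1, h2]
  · intro hd
    set M : ℝ := |d 1| + |d 2| with hM
    refine ⟨(WithLp.toLp 2 ![0, d 1, d 2 - M] : EuclideanSpace ℝ (Fin 3)), ?_,
      (WithLp.toLp 2 ![0, 0, -M] : EuclideanSpace ℝ (Fin 3)), ?_, ?_⟩
    · intro q hq
      have hq' : q 0 ^ 2 + |q 1| ≤ q 2 := hq
      simp only [sub_zero, PiLp.inner_apply, RCLike.inner_apply, conj_trivial,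
        Fin.sum_univ_three, PiLp.toLp_apply, Matrix.cons_val_zero, Matrix.cons_val_one,
        Matrix.head_cons, Matrix.cons_val_two, Matrix.tail_cons]
      have h1 : |q 1| ≤ q 2 := by nlinarith [sq_nonneg (q 0), hq']
      have h2 : d 1 * q 1 ≤ |d 1| * |q 1| := by
        calc d 1 * q 1 ≤ |d 1 * q 1| := le_abs_self _
        _ = |d 1| * |q 1| := abs_mul _ _
      have h3 : |d 1| + d 2 ≤ M := by simp [hM]; nlinarith [le_abs_self (d 2)]
      have h4 : (0:ℝ) ≤ q 2 := le_trans (abs_nonneg _) h1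
      nlinarith [abs_nonneg (d 1), abs_nonneg (q 1)]
    · intro q hq
      have hq' : q 0 ^ 2 + |q 1| ≤ q 2 := hq
      simp only [sub_zero, PiLp.inner_apply, RCLike.inner_apply, conj_trivial,
        Fin.sum_univ_three, PiLp.toLp_apply, Matrix.cons_val_zero, Matrix.cons_val_one,
        Matrix.head_cons, Matrix.cons_val_two, Matrix.tail_cons]
      have h4 : (0:ℝ) ≤ q 2 := le_trans (by positivity) hq'
      have hM0 : (0:ℝ) ≤ M := by positivity
      nlinarith
    · ext i
      fin_cases i <;>
        simp [PiLp.sub_apply, hd]
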